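/- For every natural number n ≥ 1 and every real x ≥ 0, the partial sum of the modified Bessel function of the first kind of order zero satisfies ∑_{j=0}^{n-1} x^{2j}/(j!)² ≤ exp(2x cos(π/(n+1))). -/

import Mathlib

open Real Finset

/-- `sin` of `(j+1) * (π/(m+2))` is positive for `j ≤ m`. -/
lemma bessel_aux_sin_pos (m j : ℕ) (hj : j ≤ m) :
    0 < Real.sin ((j + 1) * (π / (m + 2))) := by
  apply Real.sin_pos_of_pos_of_lt_pi
  · have : (0:ℝ) < π / (m + 2) := by positivity
    have : (0:ℝ) < (j:ℝ) + 1 := by positivity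
    positivity
  · have h1 : ((j:ℝ) + 1) < (m:ℝ) + 2 := by
      have : (j:ℝ) ≤ (m:ℝ) := by exact_mod_cast hj
      linarith
    have h2 : (0:ℝ) < π / (m + 2) := by positivity
    calc ((j:ℝ) + 1) * (π / (m + 2)) < ((m:ℝ) + 2) * (π / (m + 2)) := by
          exact mul_lt_mul_of_pos_right h1 h2
      _ = π := by
          field_simp

/-- Three-term recurrence for sines. -/
lemma bessel_aux_rec (a b : ℝ) :
    Real.sin (a - b) + Real.sin (a + b) = 2 * Real.cos b * Real.sin a := by
  rw [Real.sin_add, Real.sin_sub]; ring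

/-- The spectral bound for the quadratic form of the path graph `P_{m+1}`. -/
lemma bessel_aux_quad (m : ℕ) (v : ℕ → ℝ) :
    ∑ j ∈ Finset.range m, 2 * v (j + 1) * v j ≤
      2 * Real.cos (π / (m + 2)) * ∑ j ∈ Finset.range (m + 1), (v j) ^ 2 := by
  set θ : ℝ := π / (m + 2) with hθ
  set s : ℕ → ℝ := fun j => Real.sin (j * θ) with hs
  have hspos : ∀ j : ℕ, j ≤ m → 0 < s (j + 1) := by
    intro j hj
    have := bessel_aux_sin_pos m j hj
    simpa [hs, hθ] using this
  have hrec : ∀ j : ℕ, s j + s (j + 2) = 2 * Real.cos θ * s (j + 1) := by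
    intro j
    have := bessel_aux_rec (((j:ℝ) + 1) * θ) θ
    have e1 : ((j:ℝ) + 1) * θ - θ = (j:ℝ) * θ := by ring
    have e2 : ((j:ℝ) + 1) * θ + θ = ((j:ℝ) + 2) * θ := by ring
    rw [e1, e2] at this
    simpa [hs, add_mul, mul_comm, mul_assoc, push_cast] using this
  have hend : s (m + 2) = 0 := by
    have hme : ((m:ℝ) + 2) * θ = π := by rw [hθ]; field_simp
    have : s (m + 2) = Real.sin (((m:ℝ) + 2) * θ) := by
      simp [hs]
    rw [this, hme, Real.sin_pi]
  -- rewrite the RHS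
  have lhs_eq : 2 * Real.cos θ * ∑ j ∈ Finset.range (m + 1), (v j) ^ 2
      = (∑ j ∈ Finset.range (m + 1), (s j / s (j + 1)) * (v j) ^ 2)
        + ∑ j ∈ Finset.range (m + 1), (s (j + 2) / s (j + 1)) * (v j) ^ 2 := by
    rw [Finset.mul_sum, ← Finset.sum_add_distrib]
    apply Finset.sum_congr rfl
    intro j hj
    have hpos := hspos j (by simpa using Nat.lt_succ_iff.mp (Finset.mem_range.mp hj))
    have hcoef : s j / s (j + 1) + s (j + 2) / s (j + 1) = 2 * Real.cos θ := by
      rw [← add_div, hrec j, mul_div_assoc, div_self hpos.ne', mul_one]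
    rw [← hcoef]; ring
  have hA : (∑ j ∈ Finset.range (m + 1), (s j / s (j + 1)) * (v j) ^ 2)
      = ∑ j ∈ Finset.range m, (s (j + 1) / s (j + 2)) * (v (j + 1)) ^ 2 := by
    rw [Finset.sum_range_succ']
    have h0 : s 0 = 0 := by simp [hs]
    rw [h0]
    norm_num
  have hB : (∑ j ∈ Finset.range (m + 1), (s (j + 2) / s (j + 1)) * (v j) ^ 2)
      = ∑ j ∈ Finset.range m, (s (j + 2) / s (j + 1)) * (v j) ^ 2 := by
    rw [Finset.sum_range_succ, hend]
    norm_num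
  rw [lhs_eq, hA, hB, ← Finset.sum_add_distrib]
  apply Finset.sum_le_sum
  intro j hj
  have hjm := Finset.mem_range.mp hj
  have ha := hspos j (by omega)
  have hb := hspos (j + 1) (by omega)
  have hq : 2 * v (j + 1) * v j * (s (j + 1) * s (j + 2)) ≤
      (s (j + 1)) ^ 2 * (v (j + 1)) ^ 2 + (s (j + 2)) ^ 2 * (v j) ^ 2 := by
    nlinarith [sq_nonneg (s (j + 1) * v (j + 1) - s (j + 2) * v j)]
  have heq : (s (j + 1) / s (j + 2)) * (v (j + 1)) ^ 2 + (s (j + 2) / s (j + 1)) * (v j) ^ 2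
      = ((s (j + 1)) ^ 2 * (v (j + 1)) ^ 2 + (s (j + 2)) ^ 2 * (v j) ^ 2)
        / (s (j + 1) * s (j + 2)) := by
    field_simp
  rw [heq, le_div_iff₀ (mul_pos ha hb)]
  linarith

set_option maxHeartbeats 1600000 in
/-- Estimate for partial sums of the modified Bessel function `I₀(2x)`:
`∑_{j=0}^{n-1} x^{2j}/(j!)² ≤ exp(2x cos(π/(n+1)))`. -/
theorem bessel_partial_sum_one (n : ℕ) (hn : 1 ≤ n) (x : ℝ) (hx : 0 ≤ x) :
    ∑ j ∈ Finset.range n, x ^ (2 * j) / (Nat.factorial j : ℝ) ^ 2 ≤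
      Real.exp (2 * x * Real.cos (π / (n + 1))) := by
  obtain ⟨m, rfl⟩ : ∃ m, n = m + 1 := ⟨n - 1, by omega⟩
  set L : ℝ := 2 * Real.cos (π / ((m:ℝ) + 2)) with hL
  set S : ℝ → ℝ := fun y => ∑ j ∈ Finset.range (m + 1),
      y ^ (2 * j) / (Nat.factorial j : ℝ) ^ 2 with hSdef
  set D : ℝ → ℝ := fun y => ∑ j ∈ Finset.range (m + 1),
      ((2 * j : ℕ) : ℝ) * y ^ (2 * j - 1) / (Nat.factorial j : ℝ) ^ 2 with hDdef
  have hderiv : ∀ y : ℝ, HasDerivAt S (D y) y := by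
    intro y
    apply HasDerivAt.fun_sum
    intro j _
    exact (hasDerivAt_pow (2 * j) y).div_const _
  have hkey : ∀ y : ℝ, D y ≤ L * S y := by
    intro y
    set v : ℕ → ℝ := fun j => y ^ j / (Nat.factorial j : ℝ) with hv
    have hDv : D y = ∑ j ∈ Finset.range m, 2 * v (j + 1) * v j := by
      rw [hDdef]
      simp only
      rw [Finset.sum_range_succ']
      norm_num
      apply Finset.sum_congr rfl
      intro j _
      have e : 2 * (j + 1) - 1 = 2 * j + 1 := by omega
      rw [e, hv]
      simp only
      have hf : ((Nat.factorial j : ℝ)) ≠ 0 := by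
        exact_mod_cast (Nat.factorial_ne_zero j)
      have hf1 : ((Nat.factorial (j + 1) : ℝ)) ≠ 0 := by
        exact_mod_cast (Nat.factorial_ne_zero (j + 1))
      rw [Nat.factorial_succ]
      push_cast
      field_simp
      ring
    have hSv : S y = ∑ j ∈ Finset.range (m + 1), (v j) ^ 2 := by
      apply Finset.sum_congr rfl
      intro j _
      rw [hv]
      simp only
      rw [div_pow, ← pow_mul, mul_comm j 2]
    rw [hDv, hSv, hL]
    exact bessel_aux_quad m v
  have hF : ∀ y : ℝ, HasDerivAt (fun z => S z * Real.exp (-L * z))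
      (D y * Real.exp (-L * y) + S y * (Real.exp (-L * y) * -L)) y := by
    intro y
    have h1 : HasDerivAt (fun z : ℝ => Real.exp (-L * z)) (Real.exp (-L * y) * -L) y := by
      have h2 : HasDerivAt (fun z : ℝ => -L * z) (-L) y := by
        simpa using (hasDerivAt_id y).const_mul (-L)
      simpa using h2.exp
    exact (hderiv y).mul h1
  have hanti : Antitone (fun z => S z * Real.exp (-L * z)) := by
    apply antitone_of_deriv_nonpos
    · intro y; exact (hF y).differentiableAt
    · intro y
      rw [(hF y).deriv]
      have h1 := hkey y
      have h2 := Real.exp_pos (-L * y)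
      nlinarith [mul_le_mul_of_nonneg_right h1 h2.le]
  have hS0 : S 0 = 1 := by
    rw [hSdef]
    simp only
    rw [Finset.sum_range_succ']
    norm_num
  have hle : S x * Real.exp (-L * x) ≤ 1 := by
    have := hanti hx
    simp only at this
    rw [mul_zero, Real.exp_zero, mul_one, hS0] at this
    exact this
  have hfin : S x ≤ Real.exp (L * x) := by
    have hpos := Real.exp_pos (L * x)
    have h3 := mul_le_mul_of_nonneg_right hle hpos.le
    rw [one_mul, mul_assoc, ← Real.exp_add] at h3
    simpa using h3
  have hcast : π / ((m : ℝ) + 1 + 1) = π / ((m : ℝ) + 2) := by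
    rw [show ((m : ℝ) + 1 + 1) = (m : ℝ) + 2 from by ring]
  calc ∑ j ∈ Finset.range (m + 1), x ^ (2 * j) / (Nat.factorial j : ℝ) ^ 2
      = S x := rfl
    _ ≤ Real.exp (L * x) := hfin
    _ = Real.exp (2 * x * Real.cos (π / (((m + 1 : ℕ) : ℝ) + 1))) := by
        rw [hL]
        push_cast
        rw [hcast]
        congr 1
        ring
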